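/- Let v ∈ T_r and initialize a block of 2r+1 consecutive vertices of C_n(r) (n > 2(2r+1)) with the word v (1 = active, 0 = passive), the other vertices being arbitrary. If the strict majority update is applied successively to the vertices of the block at positions r, r+1, …, 2r−1 (relative to the start of the block), then after this sequence of updates all vertices of the block at positions r through 2r are active. -/

import Mathlib

open Finset


/-- Number of active neighbors of vertex `i` in the ring `C_n(r)`.
For `n > 2r+1` the `2r` offsets `±1, …, ±r` give pairwise distinct neighbors. -/
def activeNbrs (n r : ℕ) (σ : ZMod n → Bool) (i : ZMod n) : ℕ :=
  ∑ k ∈ Finset.Icc 1 r,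
    ((if σ (i + (k : ZMod n)) then 1 else 0) + (if σ (i - (k : ZMod n)) then 1 else 0))

/-- One synchronous step of strict majority bootstrap percolation on `C_n(r)`:
a passive vertex (degree `2r`) becomes active iff at least `r+1 = ⌈(2r+1)/2⌉`
of its neighbors are active; active vertices stay active. -/
def ringStep (n r : ℕ) (σ : ZMod n → Bool) : ZMod n → Bool :=
  fun i => σ i || decide (r + 1 ≤ activeNbrs n r σ i)

/-- The fixed point of strict MBP on `C_n(r)`; `n` monotone steps suffice to stabilize. -/
def ringFix (n r : ℕ) (σ : ZMod n → Bool) : ZMod n → Bool :=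
  (ringStep n r)^[n] σ

/-- Probability of an event under i.i.d. Bernoulli(`p`) initial states. -/
noncomputable def pr {V : Type} [Fintype V] [DecidableEq V] (p : ℝ) (S : Set (V → Bool)) : ℝ :=
  ∑ σ : V → Bool, S.indicator (fun τ => ∏ v, (if τ v then p else 1 - p)) σ

/-- Expectation of a random variable under i.i.d. Bernoulli(`p`) initial states. -/
noncomputable def expec {V : Type} [Fintype V] [DecidableEq V]
    (p : ℝ) (f : (V → Bool) → ℝ) : ℝ :=
  ∑ σ : V → Bool, f σ * ∏ v, (if σ v then p else 1 - p)

/-- `E_p[X_0(n,r)]`: probability that vertex `0` is active at the fixed point. -/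
noncomputable def Ex (r : ℕ) (p : ℝ) (n : ℕ) : ℝ :=
  if h : n = 0 then 0 else
    haveI : NeZero n := ⟨h⟩
    pr p {σ : ZMod n → Bool | ringFix n r σ 0 = true}

/-- `p_R(n,r,p)`: probability that strictly more than half of the `n` vertices are
active at the fixed point of strict MBP on `C_n(r)`. -/
noncomputable def pR (r : ℕ) (p : ℝ) (n : ℕ) : ℝ :=
  if h : n = 0 then 0 else
    haveI : NeZero n := ⟨h⟩
    pr p {σ : ZMod n → Bool |
      n < 2 * (Finset.univ.filter (fun i : ZMod n => ringFix n r σ i = true)).card}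

/-- `W_{ℓ,r}`: the set of 0-1 words of length `ℓ` containing `r+1` consecutive `0`s. -/
def Wword (ℓ r : ℕ) : Set (Fin ℓ → Bool) :=
  {v | ∃ i : ℕ, ∃ h : i + (r + 1) ≤ ℓ, ∀ j : ℕ, ∀ hj : j < r + 1,
    v ⟨i + j, by omega⟩ = false}

/-- `S_{ℓ,r}`: the set of 0-1 words of length `ℓ` with no `r+1` consecutive `0`s such that,
when a block of `ℓ` consecutive vertices of the ring `C_n(r)` is initialized with the word,
then whatever the initial states of the remaining vertices, all vertices of the block are
active at the fixed point of strict MBP. -/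
def Sspread (ℓ r : ℕ) : Set (Fin ℓ → Bool) :=
  {v | v ∉ Wword ℓ r ∧
    ∀ n : ℕ, 2 * r + 1 < n → ℓ ≤ n → ∀ c : ZMod n, ∀ σ : ZMod n → Bool,
      (∀ i : Fin ℓ, σ (c + ((i : ℕ) : ZMod n)) = v i) →
      ∀ i : Fin ℓ, ringFix n r σ (c + ((i : ℕ) : ZMod n)) = true}

/-- Strict majority update applied to the single vertex `i` of `C_n(r)`. -/
def updAt (n r : ℕ) (σ : ZMod n → Bool) (i : ZMod n) : ZMod n → Bool :=
  fun j => if j = i then σ i || decide (r + 1 ≤ activeNbrs n r σ i) else σ j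

/-- Apply the strict majority update successively (in this order) to the vertices
`c + r, c + r + 1, …, c + 2r − 1` of `C_n(r)`. -/
def seqUpd (n r : ℕ) (c : ZMod n) (σ : ZMod n → Bool) : ZMod n → Bool :=
  (List.range r).foldl (fun τ k => updAt n r τ (c + ((r + k : ℕ) : ZMod n))) σ


/-- Weight function `ω` on the alphabet `{0,1}²`: `ω(0,0) = +1`, `ω(1,1) = −1`,
and `ω(a,b) = 0` otherwise. -/
def dyckWt (a b : Bool) : ℤ :=
  if a = false ∧ b = false then 1 else if a = true ∧ b = true then -1 else 0

open Fin.NatCast in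
/-- `T_r`: binary words `v` of length `2r+1` with exactly `r+1` ones and `r` zeros,
`v_0 = v_{2r} = 1`, `v_r = 0`, and such that the word `w_1 ⋯ w_{r−1}` over `{0,1}²`
with `w_i = (v_i, v_{i+r})` is a generalized Dyck word for the weight `dyckWt`:
every prefix sum of weights is nonnegative, and the total sum is `0`. -/
def Tset (r : ℕ) : Set (Fin (2 * r + 1) → Bool) :=
  {v | (Finset.univ.filter (fun i => v i = true)).card = r + 1 ∧
       (Finset.univ.filter (fun i => v i = false)).card = r ∧
       v ((0 : ℕ) : Fin (2 * r + 1)) = true ∧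
       v ((2 * r : ℕ) : Fin (2 * r + 1)) = true ∧
       v ((r : ℕ) : Fin (2 * r + 1)) = false ∧
       (∀ j ∈ Finset.Icc 1 (r - 1),
         0 ≤ ∑ i ∈ Finset.Icc 1 j,
           dyckWt (v ((i : ℕ) : Fin (2 * r + 1))) (v ((i + r : ℕ) : Fin (2 * r + 1)))) ∧
       ∑ i ∈ Finset.Icc 1 (r - 1),
           dyckWt (v ((i : ℕ) : Fin (2 * r + 1))) (v ((i + r : ℕ) : Fin (2 * r + 1))) = 0}


def upds (n r : ℕ) (c : ZMod n) (σ : ZMod n → Bool) : ℕ → ZMod n → Bool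
  | 0 => σ
  | (k+1) => updAt n r (upds n r c σ k) (c + ((r + k : ℕ) : ZMod n))

lemma seqUpd_eq_upds (n r : ℕ) (c : ZMod n) (σ : ZMod n → Bool) :
    seqUpd n r c σ = upds n r c σ r := by
  suffices h : ∀ k, (List.range k).foldl
      (fun τ m => updAt n r τ (c + ((r + m : ℕ) : ZMod n))) σ = upds n r c σ k from h r
  intro k
  induction k with
  | zero => rfl
  | succ k ih => rw [List.range_succ, List.foldl_append, ih]; rfl

lemma updAt_mono (n r : ℕ) {τ : ZMod n → Bool} {i j : ZMod n} (h : τ j = true) :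
    updAt n r τ i j = true := by
  unfold updAt
  by_cases hji : j = i
  · rw [if_pos hji, show τ i = true from hji ▸ h, Bool.true_or]
  · rwa [if_neg hji]

lemma upds_of_init (n r : ℕ) (c : ZMod n) (σ : ZMod n → Bool) {j : ZMod n}
    (h : σ j = true) : ∀ k, upds n r c σ k j = true
  | 0 => h
  | (k+1) => updAt_mono n r (upds_of_init n r c σ h k)

lemma add_cast_inj (n r : ℕ) (c : ZMod n) (hn : 2*(2*r+1) < n) {a b : ℕ}
    (ha : a < n) (hb : b < n) (h : c + (a : ZMod n) = c + (b : ZMod n)) : a = b := by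
  haveI : NeZero n := ⟨by omega⟩
  have h2 : (a : ZMod n) = (b : ZMod n) := by
    have := congrArg (fun x => x - c) h
    simpa [add_comm, add_sub_cancel_right] using this
  have h3 := congrArg ZMod.val h2
  rwa [ZMod.val_natCast_of_lt ha, ZMod.val_natCast_of_lt hb] at h3

lemma upds_untouched (n r : ℕ) (c : ZMod n) (σ : ZMod n → Bool) (hn : 2*(2*r+1) < n) :
    ∀ k, k ≤ r → ∀ t, t ≤ 3*r → (t < r ∨ r + k ≤ t) →
    upds n r c σ k (c + (t : ZMod n)) = σ (c + (t : ZMod n)) := by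
  intro k
  induction k with
  | zero => intro _ t _ _; rfl
  | succ k ih =>
    intro hk t ht hcond
    show updAt n r (upds n r c σ k) (c + ((r+k : ℕ) : ZMod n)) _ = _
    unfold updAt
    rw [if_neg, ih (by omega) t ht (by omega)]
    intro heq
    have := add_cast_inj n r c hn (by omega : t < n) (by omega : r + k < n) heq
    omega

lemma count_lemma (r k : ℕ) (O : ℕ → ℤ) (hk : k < r)
    (h1 : ∑ t ∈ Finset.Ico 0 (2*r+1), O t = (r:ℤ) + 1)
    (h0 : O 0 = 1) (hOr : O r = 0) (hOrk : O (r+k) = 0)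
    (hD : ∀ j ∈ Finset.Icc 1 (r-1), 0 ≤ ∑ i ∈ Finset.Icc 1 j, (1 - O i - O (i+r))) :
    (r:ℤ) + 1 ≤ (k : ℤ) + ∑ t ∈ Finset.Ico k r, O t + ∑ t ∈ Finset.Ico (r+k+1) (2*r+1), O t := by
  have hW : 0 ≤ ∑ i ∈ Finset.Icc 1 (k-1), (1 - O i - O (i+r)) := by
    rcases Nat.lt_or_ge k 2 with h | h
    · have hk1 : k - 1 = 0 := by omega
      rw [hk1]; simp
    · exact hD (k-1) (by rw [Finset.mem_Icc]; omega)
  have hAD : ∑ t ∈ Finset.Ico 0 k, O t + ∑ t ∈ Finset.Ico (r+1) (r+k+1), O t ≤ (k:ℤ) := by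
    rcases Nat.eq_zero_or_pos k with rfl | hk0
    · simp
    · obtain ⟨m, rfl⟩ : ∃ m, k = m+1 := ⟨k-1, by omega⟩
      have hW' : 0 ≤ ∑ i ∈ Finset.Icc 1 m, (1 - O i - O (i+r)) := by simpa using hW
      have hA : ∑ t ∈ Finset.Ico 0 (m+1), O t = O 0 + ∑ i ∈ Finset.Icc 1 m, O i := by
        rw [Finset.sum_eq_sum_Ico_succ_bot (Nat.succ_pos m), Nat.succ_eq_add_one, Finset.Ico_add_one_right_eq_Icc]
      have hB : ∑ t ∈ Finset.Ico (r+1) (r+(m+1)+1), O t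
          = ∑ i ∈ Finset.Icc 1 m, O (i+r) + O (r+(m+1)) := by
        have h2 : ∑ t ∈ Finset.Ico (r+1) (r+m+2), O t = ∑ i ∈ Finset.Ico 1 (m+2), O (r+i) := by
          rw [Finset.sum_Ico_eq_sum_range, Finset.sum_Ico_eq_sum_range,
            show r+m+2-(r+1) = m+1 from by omega, show m+2-1 = m+1 from rfl]
          exact Finset.sum_congr rfl (fun i _ => by congr 1; omega)
        rw [show r+(m+1)+1 = r+m+2 from by omega, h2,
          show (m+2) = (m+1)+1 from rfl, Finset.sum_Ico_succ_top (by omega : 1 ≤ m+1),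
          Finset.Ico_add_one_right_eq_Icc]
        congr 1
        exact Finset.sum_congr rfl (fun i _ => by congr 1; omega)
      have hsum : ∑ i ∈ Finset.Icc 1 m, O i + ∑ i ∈ Finset.Icc 1 m, O (i+r)
          = (m:ℤ) - ∑ i ∈ Finset.Icc 1 m, (1 - O i - O (i+r)) := by
        rw [← Finset.sum_add_distrib]
        have e : ∀ i ∈ Finset.Icc 1 m, (1 - O i - O (i+r)) = 1 - (O i + O (i+r)) :=
          fun i _ => by ring
        rw [Finset.sum_congr rfl e, Finset.sum_sub_distrib, Finset.sum_const, Nat.card_Icc]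
        simp
      rw [hA, hB, h0, hOrk]
      push_cast
      linarith [hW', hsum]
  have s1 : ∑ t ∈ Finset.Ico 0 k, O t + ∑ t ∈ Finset.Ico k r, O t
      = ∑ t ∈ Finset.Ico 0 r, O t := Finset.sum_Ico_consecutive O (by omega) (by omega)
  have s2 : ∑ t ∈ Finset.Ico 0 r, O t + ∑ t ∈ Finset.Ico r (r+1), O t
      = ∑ t ∈ Finset.Ico 0 (r+1), O t := Finset.sum_Ico_consecutive O (by omega) (by omega)
  have s3 : ∑ t ∈ Finset.Ico 0 (r+1), O t + ∑ t ∈ Finset.Ico (r+1) (r+k+1), O t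
      = ∑ t ∈ Finset.Ico 0 (r+k+1), O t := Finset.sum_Ico_consecutive O (by omega) (by omega)
  have s4 : ∑ t ∈ Finset.Ico 0 (r+k+1), O t + ∑ t ∈ Finset.Ico (r+k+1) (2*r+1), O t
      = ∑ t ∈ Finset.Ico 0 (2*r+1), O t := Finset.sum_Ico_consecutive O (by omega) (by omega)
  have sr : ∑ t ∈ Finset.Ico r (r+1), O t = 0 := by
    rw [Finset.sum_Ico_eq_sum_range]; simp [hOr]
  linarith [s1, s2, s3, s4, sr, hAD, h1]

lemma dyckWt_eq (a b : Bool) :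
    dyckWt a b = 1 - (if a = true then (1:ℤ) else 0) - (if b = true then (1:ℤ) else 0) := by
  cases a <;> cases b <;> simp [dyckWt]

open Fin.NatCast

/-- If a block of `2r+1` consecutive vertices of `C_n(r)` (starting at `c`, with
`n > 2(2r+1)`) is initialized with a word `v ∈ T_r` and the strict majority update is
applied successively to the block vertices at relative positions `r, r+1, …, 2r−1`, then
afterwards all block vertices at relative positions `r` through `2r` are active. -/
theorem sweep_activates_block (r n : ℕ) (hr : 0 < r) (hn : 2 * (2 * r + 1) < n)
    (v : Fin (2 * r + 1) → Bool) (hv : v ∈ Tset r) (c : ZMod n) (σ : ZMod n → Bool)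
    (hσ : ∀ i : Fin (2 * r + 1), σ (c + ((i : ℕ) : ZMod n)) = v i) :
    ∀ i : ℕ, r ≤ i → i ≤ 2 * r → seqUpd n r c σ (c + ((i : ℕ) : ZMod n)) = true := by
  obtain ⟨hcard1, -, hv0, hv2r, hvr, hDyck, -⟩ := hv
  have finval : ∀ t : ℕ, t < 2*r+1 → (((t : ℕ) : Fin (2*r+1)) : ℕ) = t := by
    intro t ht
    simp [Fin.val_natCast, Nat.mod_eq_of_lt ht]
  have hσ' : ∀ t : ℕ, t ≤ 2*r → σ (c + (t : ZMod n)) = v ((t : ℕ) : Fin (2*r+1)) := by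
    intro t ht
    have h := hσ ((t : ℕ) : Fin (2*r+1))
    rwa [finval t (by omega)] at h
  set O : ℕ → ℤ := fun t => if v ((t : ℕ) : Fin (2*r+1)) = true then 1 else 0 with hO
  have h1 : ∑ t ∈ Finset.Ico 0 (2*r+1), O t = (r:ℤ) + 1 := by
    rw [← Finset.range_eq_Ico, ← Fin.sum_univ_eq_sum_range]
    have e : ∀ i : Fin (2*r+1), O (i : ℕ) = (if v i = true then (1:ℤ) else 0) := by
      intro i; rw [hO]; simp [Fin.cast_val_eq_self]
    rw [Finset.sum_congr rfl (fun i _ => e i), Finset.sum_boole, hcard1]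
    push_cast; ring
  have hDyck' : ∀ j ∈ Finset.Icc 1 (r-1), 0 ≤ ∑ i ∈ Finset.Icc 1 j, (1 - O i - O (i+r)) := by
    intro j hj
    refine le_trans (hDyck j hj) (le_of_eq (Finset.sum_congr rfl (fun i _ => ?_)))
    rw [dyckWt_eq, hO]
  have hOr0 : O r = 0 := by simp only [hO]; rw [hvr]; simp
  have hO0 : O 0 = 1 := by simp only [hO]; rw [hv0]; simp
  have main : ∀ k, k ≤ r → ∀ j, j < k → upds n r c σ k (c + ((r+j : ℕ) : ZMod n)) = true := by
    intro k
    induction k with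
    | zero => intro _ j hj; omega
    | succ k ih =>
      intro hk1 j hj
      have hk : k ≤ r := by omega
      show updAt n r (upds n r c σ k) (c + ((r+k : ℕ) : ZMod n)) _ = true
      rcases Nat.lt_or_ge j k with hjk | hjk
      · exact updAt_mono n r (ih hk j hjk)
      · obtain rfl : j = k := by omega
        unfold updAt
        rw [if_pos rfl]
        by_cases hvt : v ((r+j : ℕ) : Fin (2*r+1)) = true
        · have hs : σ (c + ((r+j:ℕ) : ZMod n)) = true := by
            rw [hσ' (r+j) (by omega), hvt]
          rw [upds_of_init n r c σ hs j, Bool.true_or]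
        · -- passive case: count active neighbors
          suffices hA : r + 1 ≤ activeNbrs n r (upds n r c σ j) (c + ((r+j : ℕ) : ZMod n)) by
            rw [decide_eq_true hA, Bool.or_true]
          have hOrk : O (r+j) = 0 := by simp only [hO]; exact if_neg hvt
          have hguar : ∀ t, t ≤ 3*r →
              ((r ≤ t ∧ t < r + j) ∨ (t ≤ 2*r ∧ v ((t:ℕ) : Fin (2*r+1)) = true)) →
              upds n r c σ j (c + (t : ZMod n)) = true := by
            intro t ht hc
            rcases hc with ⟨h1t, h2t⟩ | ⟨h1t, h2t⟩
            · rw [show t = r + (t - r) from by omega]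
              exact ih hk (t-r) (by omega)
            · have hs : σ (c + (t : ZMod n)) = true := by rw [hσ' t h1t, h2t]
              exact upds_of_init n r c σ hs j
          set g : ℕ → ℕ := fun t =>
            if (r ≤ t ∧ t < r + j) ∨ (t ≤ 2*r ∧ v ((t:ℕ) : Fin (2*r+1)) = true)
            then 1 else 0 with hg
          have hgle : ∀ t, t ≤ 3*r →
              g t ≤ (if upds n r c σ j (c + (t : ZMod n)) = true then 1 else 0) := by
            intro t ht
            by_cases hc : (r ≤ t ∧ t < r + j) ∨ (t ≤ 2*r ∧ v ((t:ℕ) : Fin (2*r+1)) = true)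
            · rw [hg]; simp only
              rw [if_pos hc, if_pos (hguar t ht hc)]
            · rw [hg]; simp only
              rw [if_neg hc]; exact Nat.zero_le _
          have hstep2 : ∑ m ∈ Finset.Icc 1 r, (g (r+j+m) + g (r+j-m))
              ≤ activeNbrs n r (upds n r c σ j) (c + ((r+j : ℕ) : ZMod n)) := by
            unfold activeNbrs
            apply Finset.sum_le_sum
            intro m hm
            rw [Finset.mem_Icc] at hm
            have e1 : c + ((r+j : ℕ) : ZMod n) + (m : ZMod n) = c + ((r+j+m : ℕ) : ZMod n) := by
              push_cast; ring
            have e2 : c + ((r+j : ℕ) : ZMod n) - (m : ZMod n) = c + ((r+j-m : ℕ) : ZMod n) := by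
              rw [Nat.cast_sub (by omega : m ≤ r+j)]; push_cast; ring
            rw [e1, e2]
            exact Nat.add_le_add (hgle _ (by omega)) (hgle _ (by omega))
          have hsA : ∑ m ∈ Finset.Icc 1 r, g (r+j+m)
              = ∑ t ∈ Finset.Ico (r+j+1) (r+j+1+r), g t := by
            rw [Finset.sum_Ico_eq_sum_range, show r+j+1+r - (r+j+1) = r from by omega,
              show Finset.Icc 1 r = Finset.Ico 1 (r+1) from (Finset.Ico_add_one_right_eq_Icc 1 r).symm,
              Finset.sum_Ico_eq_sum_range, show r+1-1 = r from rfl]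
            exact Finset.sum_congr rfl (fun i _ => by congr 1; omega)
          have hsB : ∑ m ∈ Finset.Icc 1 r, g (r+j-m) = ∑ t ∈ Finset.Ico j (j+r), g t := by
            rw [Finset.sum_Ico_eq_sum_range, show j+r-j = r from by omega,
              show Finset.Icc 1 r = Finset.Ico 1 (r+1) from (Finset.Ico_add_one_right_eq_Icc 1 r).symm,
              Finset.sum_Ico_eq_sum_range, show r+1-1 = r from rfl,
              ← Finset.sum_range_reflect (fun i => g (j+i)) r]
            refine Finset.sum_congr rfl (fun i hi => ?_)
            rw [Finset.mem_range] at hi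
            congr 1; omega
          set ON : ℕ → ℕ := fun t => if v ((t:ℕ) : Fin (2*r+1)) = true then 1 else 0 with hON
          have hEB : ∑ t ∈ Finset.Ico j (j+r), g t = j + ∑ t ∈ Finset.Ico j r, ON t := by
            rw [← Finset.sum_Ico_consecutive g (show j ≤ r by omega) (show r ≤ j+r by omega)]
            have e1 : ∑ t ∈ Finset.Ico j r, g t = ∑ t ∈ Finset.Ico j r, ON t := by
              refine Finset.sum_congr rfl (fun t htm => ?_)
              rw [Finset.mem_Ico] at htm
              rw [hg, hON]; simp only
              by_cases hvt2 : v ((t:ℕ) : Fin (2*r+1)) = true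
              · rw [if_pos (Or.inr ⟨by omega, hvt2⟩), if_pos hvt2]
              · rw [if_neg, if_neg hvt2]
                rintro (⟨h1t, _⟩ | ⟨_, h2t⟩)
                · omega
                · exact hvt2 h2t
            have e2 : ∑ t ∈ Finset.Ico r (j+r), g t = j := by
              have e : ∀ t ∈ Finset.Ico r (j+r), g t = 1 := by
                intro t htm
                rw [Finset.mem_Ico] at htm
                rw [hg]; simp only
                exact if_pos (Or.inl ⟨htm.1, by omega⟩)
              rw [Finset.sum_congr rfl e, Finset.sum_const, smul_eq_mul, mul_one, Nat.card_Ico]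
              omega
            rw [e1, e2, Nat.add_comm]
          have hEA : ∑ t ∈ Finset.Ico (r+j+1) (r+j+1+r), g t
              = ∑ t ∈ Finset.Ico (r+j+1) (2*r+1), ON t := by
            rw [← Finset.sum_Ico_consecutive g (show r+j+1 ≤ 2*r+1 by omega)
              (show 2*r+1 ≤ r+j+1+r by omega)]
            have e1 : ∑ t ∈ Finset.Ico (r+j+1) (2*r+1), g t
                = ∑ t ∈ Finset.Ico (r+j+1) (2*r+1), ON t := by
              refine Finset.sum_congr rfl (fun t htm => ?_)
              rw [Finset.mem_Ico] at htm
              rw [hg, hON]; simp only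
              by_cases hvt2 : v ((t:ℕ) : Fin (2*r+1)) = true
              · rw [if_pos (Or.inr ⟨by omega, hvt2⟩), if_pos hvt2]
              · rw [if_neg, if_neg hvt2]
                rintro (⟨_, h2t⟩ | ⟨_, h2t⟩)
                · omega
                · exact hvt2 h2t
            have e2 : ∑ t ∈ Finset.Ico (2*r+1) (r+j+1+r), g t = 0 := by
              refine Finset.sum_eq_zero (fun t htm => ?_)
              rw [Finset.mem_Ico] at htm
              rw [hg]; simp only
              refine if_neg ?_
              rintro (⟨_, h2t⟩ | ⟨h2t, _⟩) <;> omega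
            rw [e1, e2, Nat.add_zero]
          have hcount := count_lemma r j O (by omega) h1 hO0 hOr0 hOrk hDyck'
          have hcast : ∀ s : Finset ℕ, ((∑ t ∈ s, ON t : ℕ) : ℤ) = ∑ t ∈ s, O t := by
            intro s
            rw [Nat.cast_sum]
            refine Finset.sum_congr rfl (fun t _ => ?_)
            by_cases h : v ((t:ℕ) : Fin (2*r+1)) = true <;> simp [hON, hO, h]
          have hfinal : r + 1 ≤ j + ∑ t ∈ Finset.Ico j r, ON t
              + ∑ t ∈ Finset.Ico (r+j+1) (2*r+1), ON t := by
            rw [← hcast, ← hcast] at hcount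
            exact_mod_cast hcount
          refine le_trans ?_ hstep2
          rw [Finset.sum_add_distrib, hsA, hsB, hEA, hEB]
          omega
  intro i hi1 hi2
  rw [seqUpd_eq_upds]
  rcases Nat.lt_or_ge i (2*r) with hlt | hge
  · rw [show i = r + (i - r) from by omega]
    exact main r le_rfl (i-r) (by omega)
  · obtain rfl : i = 2*r := by omega
    rw [upds_untouched n r c σ hn r le_rfl (2*r) (by omega) (by omega),
      hσ' (2*r) le_rfl, hv2r]
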